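/- For every prime number p and all natural numbers a, b with a ≥ 4, the diagonal quadratic form over ℤ_p in a + b variables with a coefficients equal to +1 and b coefficients equal to −1 is equivalent (isometric) to the diagonal quadratic form in a + b variables with a − 4 coefficients equal to +1 and b + 4 coefficients equal to −1. -/

import Mathlib

open QuadraticMap

private lemma norm_eq_one_of_toZMod_ne_zero {p : ℕ} [Fact p.Prime] (z : ℤ_[p])
    (h : PadicInt.toZMod z ≠ 0) : ‖z‖ = 1 := by
  refine le_antisymm (PadicInt.norm_le_one z) (not_lt.1 fun hlt => h ?_)
  have : z ∈ RingHom.ker (PadicInt.toZMod : ℤ_[p] →+* ZMod p) := by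
    rw [PadicInt.ker_toZMod, PadicInt.maximalIdeal_eq_span_p, Ideal.mem_span_singleton,
      ← PadicInt.norm_lt_one_iff_dvd]
    exact hlt
  exact this

private lemma norm_lt_one_of_toZMod_eq_zero {p : ℕ} [Fact p.Prime] (z : ℤ_[p])
    (h : PadicInt.toZMod z = 0) : ‖z‖ < 1 := by
  rw [PadicInt.norm_lt_one_iff_dvd, ← Ideal.mem_span_singleton,
    ← PadicInt.maximalIdeal_eq_span_p, ← PadicInt.ker_toZMod]
  exact h

private lemma padic_odd_case (p : ℕ) [hp : Fact p.Prime] (hodd : p ≠ 2) :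
    ∃ u v : ℤ_[p], u ^ 2 + v ^ 2 = -1 := by
  obtain ⟨x, y, hxy⟩ := ZMod.sq_add_sq p (-1 : ZMod p)
  have hne : x ≠ 0 ∨ y ≠ 0 := by
    by_contra hc
    push_neg at hc
    rw [hc.1, hc.2] at hxy
    simp at hxy
  have key : ∀ x y : ZMod p, x ^ 2 + y ^ 2 = -1 → x ≠ 0 →
      ∃ u v : ℤ_[p], u ^ 2 + v ^ 2 = -1 := by
    intro x y hxy hx
    set X : ℤ_[p] := (x.val : ℤ_[p]) with hX
    set Y : ℤ_[p] := (y.val : ℤ_[p]) with hY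
    have hXmod : PadicInt.toZMod X = x := by
      simp [hX, map_natCast, ZMod.natCast_val, ZMod.cast_id]
    have hYmod : PadicInt.toZMod Y = y := by
      simp [hY, map_natCast, ZMod.natCast_val, ZMod.cast_id]
    set F : Polynomial ℤ_[p] := Polynomial.X ^ 2 + Polynomial.C (Y ^ 2 + 1) with hF
    have heval : F.eval X = X ^ 2 + Y ^ 2 + 1 := by simp [hF]; ring
    have hderiv : F.derivative.eval X = 2 * X := by
      rw [hF]
      simp [Polynomial.derivative_add, Polynomial.derivative_C, Polynomial.derivative_pow]
    have hcond : ‖F.eval X‖ < ‖F.derivative.eval X‖ ^ 2 := by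
      have h1 : ‖F.eval X‖ < 1 := by
        apply norm_lt_one_of_toZMod_eq_zero
        rw [heval]
        push_cast [map_add, map_pow, map_one, hXmod, hYmod]
        rw [hxy]; ring
      have h2 : ‖F.derivative.eval X‖ = 1 := by
        rw [hderiv]
        apply norm_eq_one_of_toZMod_ne_zero
        rw [map_mul, hXmod]
        have h2' : (PadicInt.toZMod (2 : ℤ_[p])) = (2 : ZMod p) := map_ofNat _ 2
        rw [h2']
        refine mul_ne_zero ?_ hx
        intro hz
        have h2z : (p : ℕ) ∣ 2 := by
          have := (ZMod.natCast_eq_zero_iff 2 p).1 (by exact_mod_cast hz)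
          exact this
        exact hodd ((Nat.prime_dvd_prime_iff_eq hp.out Nat.prime_two).1 h2z)
      rw [h2, one_pow]; exact h1
    obtain ⟨z, hz, -⟩ := hensels_lemma hcond
    refine ⟨z, Y, ?_⟩
    rw [hF] at hz
    simp at hz
    linear_combination hz
  rcases hne with hx | hy
  · exact key x y hxy hx
  · exact key y x (by linear_combination hxy) hy

private lemma padic_neg_one_sum_four_sq (p : ℕ) [hp : Fact p.Prime] :
    ∃ u v w t : ℤ_[p], u ^ 2 + v ^ 2 + w ^ 2 + t ^ 2 = -1 := by
  by_cases h2 : p = 2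
  · subst h2
    have h : ∃ z : ℤ_[2], z ^ 2 = -7 := by
      have hcond : ‖(Polynomial.X ^ 2 + 7 : Polynomial ℤ_[2]).eval 1‖ <
          ‖(Polynomial.X ^ 2 + 7 : Polynomial ℤ_[2]).derivative.eval 1‖ ^ 2 := by
        have h8 : ((Polynomial.X ^ 2 + 7 : Polynomial ℤ_[2]).eval 1) = 2 ^ 3 := by
          simp; norm_num
        have hd : ((Polynomial.X ^ 2 + 7 : Polynomial ℤ_[2]).derivative.eval 1) = 2 := by
          simp; norm_num
        rw [h8, hd, norm_pow]
        have : ‖(2 : ℤ_[2])‖ = 2⁻¹ := by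
          simpa using PadicInt.norm_p (p := 2)
        rw [this]
        norm_num
      obtain ⟨z, hz, -⟩ := hensels_lemma hcond
      refine ⟨z, ?_⟩
      have hz' : z ^ 2 + 7 = 0 := by simpa using hz
      linear_combination hz'
    obtain ⟨z, hz⟩ := h
    exact ⟨2, z, 1, 1, by rw [hz]; ring⟩
  · obtain ⟨u, v, huv⟩ := padic_odd_case p h2
    exact ⟨u, v, 0, 0, by rw [← huv]; ring⟩

private lemma four_sq_block_equiv {R : Type*} [CommRing R] {u v w t : R}
    (hn : u ^ 2 + v ^ 2 + w ^ 2 + t ^ 2 = -1) :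
    (QuadraticMap.weightedSumSquares R (fun _ : Fin 4 => (1 : R))).Equivalent
      (QuadraticMap.weightedSumSquares R (fun _ : Fin 4 => (-1 : R))) := by
  classical
  set M : Matrix (Fin 4) (Fin 4) R :=
    !![u, -v, -w, -t; v, u, -t, w; w, t, u, -v; t, -w, v, u] with hM
  set M' : Matrix (Fin 4) (Fin 4) R :=
    !![-u, -v, -w, -t; v, -u, -t, w; w, t, -u, -v; t, -w, v, -u] with hM'
  have h1 : M * M' = 1 := by
    ext i j
    fin_cases i <;> fin_cases j <;>
      simp [hM, hM', Matrix.mul_apply, Fin.sum_univ_four, Matrix.cons_val_zero,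
        Matrix.cons_val_one, Matrix.head_cons, Matrix.cons_val_two, Matrix.tail_cons,
        Matrix.cons_val_three, Matrix.cons_val', Matrix.empty_val',
        Matrix.cons_val_fin_one, Matrix.head_fin_const, Matrix.one_apply] <;>
      first
        | linear_combination -hn
        | linear_combination (-2 : R) * hn
        | linear_combination hn
        | linear_combination (2 : R) * hn
        | ring
  have h2 : M' * M = 1 := by
    ext i j
    fin_cases i <;> fin_cases j <;>
      simp [hM, hM', Matrix.mul_apply, Fin.sum_univ_four, Matrix.cons_val_zero,
        Matrix.cons_val_one, Matrix.head_cons, Matrix.cons_val_two, Matrix.tail_cons,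
        Matrix.cons_val_three, Matrix.cons_val', Matrix.empty_val',
        Matrix.cons_val_fin_one, Matrix.head_fin_const, Matrix.one_apply] <;>
      first
        | linear_combination -hn
        | linear_combination (-2 : R) * hn
        | linear_combination hn
        | linear_combination (2 : R) * hn
        | ring
  refine ⟨{ Matrix.toLin'OfInv h1 h2 with map_app' := ?_ }⟩
  intro x
  show weightedSumSquares R (fun _ : Fin 4 => (-1:R)) (Matrix.toLin' M' x) = _
  simp [Matrix.toLin'_apply, weightedSumSquares_apply,
    Fin.sum_univ_four, Matrix.mulVec, dotProduct, hM, hM',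
    smul_eq_mul, Matrix.cons_val_zero, Matrix.cons_val_one, Matrix.head_cons,
    Matrix.cons_val_two, Matrix.tail_cons, Matrix.cons_val_three, Matrix.cons_val',
    Matrix.empty_val', Matrix.cons_val_fin_one, Matrix.head_fin_const]
  linear_combination (-(x 0 ^ 2 + x 1 ^ 2 + x 2 ^ 2 + x 3 ^ 2)) * hn

private lemma wss_reindex {R : Type*} [CommRing R] {ι ι' : Type*} [Fintype ι] [Fintype ι']
    [DecidableEq ι] [DecidableEq ι'] (e : ι ≃ ι') (w : ι' → R) :
    (QuadraticMap.weightedSumSquares R (fun i => w (e i))).Equivalent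
      (QuadraticMap.weightedSumSquares R w) := by
  refine ⟨{ LinearEquiv.funCongrLeft R R e.symm with map_app' := ?_ }⟩
  intro x
  simp only [LinearEquiv.funCongrLeft, LinearEquiv.arrowCongr, LinearEquiv.coe_mk,
    weightedSumSquares_apply]
  refine (Fintype.sum_equiv e _ _ fun i => ?_).symm
  simp

private lemma wss_sum_block {R : Type*} [CommRing R] {ι κ : Type*} [Fintype ι] [Fintype κ]
    (w : ι → R) (v₁ v₂ : κ → R)
    (h : (QuadraticMap.weightedSumSquares R v₁).Equivalent
      (QuadraticMap.weightedSumSquares R v₂)) :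
    (QuadraticMap.weightedSumSquares R (Sum.elim w v₁)).Equivalent
      (QuadraticMap.weightedSumSquares R (Sum.elim w v₂)) := by
  obtain ⟨e⟩ := h
  let G : ((ι ⊕ κ) → R) ≃ₗ[R] ((ι ⊕ κ) → R) :=
    (LinearEquiv.sumArrowLequivProdArrow ι κ R R) ≪≫ₗ
      (LinearEquiv.prodCongr (LinearEquiv.refl R (ι → R)) e.toLinearEquiv) ≪≫ₗ
        (LinearEquiv.sumArrowLequivProdArrow ι κ R R).symm
  refine ⟨{ G with map_app' := ?_ }⟩
  intro x
  have hG : ∀ s : ι ⊕ κ, G x s = Sum.elim (fun i => x (Sum.inl i))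
      (fun k => e (fun k' => x (Sum.inr k')) k) s := by
    rintro (i | k) <;>
      simp [G, LinearEquiv.sumArrowLequivProdArrow, LinearEquiv.prodCongr,
        Equiv.sumArrowEquivProdArrow, AddEquiv.prodCongr, Equiv.prodCongr_apply,
        Prod.map_fst, Prod.map_snd, Prod.map, Function.comp_def]
  show weightedSumSquares R (Sum.elim w v₂) (G x) = _
  rw [weightedSumSquares_apply, weightedSumSquares_apply]
  rw [Fintype.sum_sum_type, Fintype.sum_sum_type]
  have he := e.map_app (fun k' => x (Sum.inr k'))
  rw [weightedSumSquares_apply, weightedSumSquares_apply] at he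
  simp only [hG, Sum.elim_inl, Sum.elim_inr]
  rw [he]

theorem signature_shift_by_four_equiv_padicInt (p : ℕ) [Fact p.Prime]
    (a b : ℕ) (ha : 4 ≤ a) :
    (QuadraticMap.weightedSumSquares ℤ_[p]
        (fun i : Fin (a + b) => if (i : ℕ) < a then (1 : ℤ_[p]) else -1)).Equivalent
      (QuadraticMap.weightedSumSquares ℤ_[p]
        (fun i : Fin ((a - 4) + (b + 4)) => if (i : ℕ) < a - 4 then (1 : ℤ_[p]) else -1)) := by
  classical
  obtain ⟨u, v, w0, t, hn⟩ := padic_neg_one_sum_four_sq p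
  have hblock := four_sq_block_equiv hn
  set m := a - 4 + b with hm
  set wt : Fin m → ℤ_[p] := fun j => if (j : ℕ) < a - 4 then 1 else -1 with hwt
  have h1 : 4 + m = a + b := by omega
  have h2 : m + 4 = (a - 4) + (b + 4) := by omega
  let e₁ : (Fin m ⊕ Fin 4) ≃ Fin (a + b) :=
    (Equiv.sumComm _ _).trans (finSumFinEquiv.trans (finCongr h1))
  let e₂ : (Fin m ⊕ Fin 4) ≃ Fin ((a - 4) + (b + 4)) :=
    finSumFinEquiv.trans (finCongr h2)
  have hf : (fun s => (fun i : Fin (a + b) =>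
      if (i : ℕ) < a then (1 : ℤ_[p]) else -1) (e₁ s))
      = Sum.elim wt (fun _ : Fin 4 => (1 : ℤ_[p])) := by
    funext s
    rcases s with j | k
    · simp only [e₁, Equiv.trans_apply, Equiv.sumComm_apply, Sum.swap_inl,
        finSumFinEquiv_apply_right, finCongr_apply, Fin.coe_cast, Fin.coe_natAdd,
        Sum.elim_inl, hwt]
      split_ifs with hc1 hc2 hc2 <;> first | rfl | omega
    · simp only [e₁, Equiv.trans_apply, Equiv.sumComm_apply, Sum.swap_inr,
        finSumFinEquiv_apply_left, finCongr_apply, Fin.coe_cast, Fin.coe_castAdd,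
        Sum.elim_inr]
      have : (k : ℕ) < a := lt_of_lt_of_le k.isLt ha
      rw [if_pos this]
  have hg : (fun s => (fun i : Fin ((a - 4) + (b + 4)) =>
      if (i : ℕ) < a - 4 then (1 : ℤ_[p]) else -1) (e₂ s))
      = Sum.elim wt (fun _ : Fin 4 => (-1 : ℤ_[p])) := by
    funext s
    rcases s with j | k
    · simp only [e₂, Equiv.trans_apply, finSumFinEquiv_apply_left, finCongr_apply,
        Fin.coe_cast, Fin.coe_castAdd, Sum.elim_inl, hwt]
    · simp only [e₂, Equiv.trans_apply, finSumFinEquiv_apply_right, finCongr_apply,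
        Fin.coe_cast, Fin.coe_natAdd, Sum.elim_inr]
      have : ¬ ((m + (k : ℕ)) < a - 4) := by omega
      rw [if_neg this]
  have E1 := wss_reindex e₁
    (fun i : Fin (a + b) => if (i : ℕ) < a then (1 : ℤ_[p]) else -1)
  rw [hf] at E1
  have E2 := wss_reindex e₂
    (fun i : Fin ((a - 4) + (b + 4)) => if (i : ℕ) < a - 4 then (1 : ℤ_[p]) else -1)
  rw [hg] at E2
  exact E1.symm.trans ((wss_sum_block wt _ _ hblock).trans E2)
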